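/- Let α ∈ (0,1) and let g : [0,∞) → [0,∞) be nondecreasing with ∫_1^∞ g(s) s^{-1-(1+α)/(1-α)} ds < ∞. Then for every d > 0 and every k > 0, ∫_0^d t^α g(k t^{α-1}) dt < ∞. -/

import Mathlib

open MeasureTheory Set

theorem my_lintegral_image_eq {s : Set ℝ} {f : ℝ → ℝ} {f' : ℝ → ℝ}
    (hs : MeasurableSet s) (hf' : ∀ x ∈ s, HasDerivWithinAt f (f' x) s x)
    (hf : InjOn f s) (g : ℝ → ENNReal) :
    ∫⁻ x in f '' s, g x = ∫⁻ x in s, ENNReal.ofReal |f' x| * g (f x) := by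
  simpa only [ContinuousLinearMap.det_toSpanSingleton] using
    lintegral_image_eq_lintegral_abs_det_fderiv_mul volume hs
      (fun x hx => (hf' x hx).hasFDerivWithinAt) hf g

/-- For `α ∈ (0,1)` and `g : [0,∞) → [0,∞)` nondecreasing with
`∫_1^∞ g(s) s^{-1-(1+α)/(1-α)} ds < ∞`, one has `∫_0^d t^α g(k t^{α-1}) dt < ∞`
for every `d > 0` and `k > 0`. -/
theorem stmt_10 (α : ℝ) (hα : α ∈ Ioo (0:ℝ) 1) (g : ℝ → ℝ)
    (hg_mono : MonotoneOn g (Ici (0:ℝ))) (hg_nonneg : ∀ s ≥ (0:ℝ), 0 ≤ g s)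
    (hg_int : ∫⁻ s in Ioi (1:ℝ), ENNReal.ofReal (g s * s ^ (-1 - (1+α)/(1-α))) < ⊤) :
    ∀ d > (0:ℝ), ∀ k > (0:ℝ),
      ∫⁻ t in Ioo (0:ℝ) d, ENNReal.ofReal (t ^ α * g (k * t ^ (α - 1))) < ⊤ := by
  obtain ⟨hα0, hα1⟩ := hα
  intro d hd k hk
  have h1α : (0:ℝ) < 1 - α := by linarith
  have hα1' : α - 1 ≠ 0 := by intro h; linarith [sub_eq_zero.mp h] -- fix later
  set e : ℝ := 2/(α-1) with he
  have he_neg : e < 0 := div_neg_of_pos_of_neg two_pos (by linarith)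
  set f : ℝ → ℝ := fun t => k * t ^ (α-1) with hf
  set f' : ℝ → ℝ := fun t => k * ((α-1) * t ^ (α-1-1)) with hf'
  set G : ℝ → ENNReal := fun s => ENNReal.ofReal ((s/k) ^ e * g s / (k*(1-α))) with hG
  have hderiv : ∀ t ∈ Ioo (0:ℝ) d, HasDerivWithinAt f (f' t) (Ioo 0 d) t := fun t ht =>
    ((Real.hasDerivAt_rpow_const (Or.inl (ne_of_gt ht.1))).const_mul k).hasDerivWithinAt
  have hanti : StrictAntiOn f (Ioo 0 d) := fun t1 h1 t2 _ h =>
    mul_lt_mul_of_pos_left (Real.rpow_lt_rpow_of_neg h1.1 h (by linarith)) hk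
  have hinj : InjOn f (Ioo 0 d) := hanti.injOn
  have key : ∫⁻ t in Ioo (0:ℝ) d, ENNReal.ofReal |f' t| * G (f t)
      = ∫⁻ t in Ioo (0:ℝ) d, ENNReal.ofReal (t ^ α * g (k * t ^ (α - 1))) := by
    apply setLIntegral_congr_fun measurableSet_Ioo
    intro t ht
    beta_reduce
    have ht0 : (0:ℝ) < t := ht.1
    have htp : (0:ℝ) < t ^ (α-2) := Real.rpow_pos_of_pos ht0 _
    have habs : |f' t| = k*(1-α) * t^(α-2) := by
      have h1 : f' t = -(k*(1-α)*t^(α-2)) := by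
        simp only [hf']
        rw [show α-1-1 = α-2 by ring]
        ring
      rw [h1, abs_neg, abs_of_nonneg (by positivity)]
    have hGft : G (f t) = ENNReal.ofReal (t^(2:ℕ) * g (f t) / (k*(1-α))) := by
      simp only [hG, hf]
      rw [mul_div_cancel_left₀ _ (ne_of_gt hk), ← Real.rpow_mul ht0.le,
        show (α-1)*e = ((2:ℕ):ℝ) by rw [he]; field_simp; norm_num, Real.rpow_natCast]
    rw [habs, hGft, ← ENNReal.ofReal_mul (by positivity)]
    congr 1
    have hts : t^(α-2) * t^(2:ℕ) = t^α := by
      rw [← Real.rpow_natCast t 2, ← Real.rpow_add ht0]; norm_num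
    have hkα : k*(1-α) ≠ 0 := by positivity
    simp only [hf]
    field_simp
    linear_combination (g (k * t^(α-1))) * hts
  have main : ∫⁻ x in f '' Ioo (0:ℝ) d, G x
      = ∫⁻ t in Ioo (0:ℝ) d, ENNReal.ofReal (t ^ α * g (k * t ^ (α - 1))) :=
    (my_lintegral_image_eq measurableSet_Ioo hderiv hinj G).trans key
  rw [← main]
  set b : ℝ := min (k * d^(α-1)) 1 with hb
  have hb0 : (0:ℝ) < b := lt_min (by positivity) one_pos
  have hb1 : b ≤ 1 := min_le_right _ _
  have himg : f '' Ioo (0:ℝ) d ⊆ Ioc b 1 ∪ Ioi 1 := by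
    rintro x ⟨t, ht, rfl⟩
    have h1 : k * d^(α-1) < f t :=
      mul_lt_mul_of_pos_left (Real.rpow_lt_rpow_of_neg ht.1 ht.2 (by linarith)) hk
    have hbf : b < f t := lt_of_le_of_lt (min_le_left _ _) h1
    rcases le_or_gt (f t) 1 with h | h
    · exact Or.inl ⟨hbf, h⟩
    · exact Or.inr h
  have part1 : ∫⁻ x in Ioc b 1, G x < ⊤ := by
    set C : ENNReal := ENNReal.ofReal ((b/k)^e * g 1 / (k*(1-α))) with hC
    have hGle : ∀ x ∈ Ioc b 1, G x ≤ C := by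
      intro x hx
      have hx0 : (0:ℝ) < x := lt_trans hb0 hx.1
      apply ENNReal.ofReal_le_ofReal
      have h1 : (x/k)^e ≤ (b/k)^e :=
        Real.rpow_le_rpow_of_nonpos (by positivity) (by gcongr; exact hx.1.le) he_neg.le
      have h2 : g x ≤ g 1 := hg_mono (mem_Ici.mpr hx0.le) (mem_Ici.mpr zero_le_one) hx.2
      have h3 : (x/k)^e * g x ≤ (b/k)^e * g 1 :=
        mul_le_mul h1 h2 (hg_nonneg x hx0.le) (by positivity)
      gcongr
    calc ∫⁻ x in Ioc b 1, G x ≤ ∫⁻ _ in Ioc b 1, C := setLIntegral_mono' measurableSet_Ioc hGle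
      _ = C * volume (Ioc b 1) := setLIntegral_const _ _
      _ < ⊤ := ENNReal.mul_lt_top ENNReal.ofReal_lt_top measure_Ioc_lt_top
  have he2 : -1 - (1+α)/(1-α) = e := by rw [he]; field_simp; ring
  rw [he2] at hg_int
  have part2 : ∫⁻ x in Ioi (1:ℝ), G x < ⊤ := by
    set c₂ : ℝ := 1 / (k^e * (k * (1-α))) with hc2
    have hc2pos : 0 < c₂ := by
      have := Real.rpow_pos_of_pos hk e
      positivity
    have heq : ∀ x ∈ Ioi (1:ℝ), G x = ENNReal.ofReal c₂ * ENNReal.ofReal (g x * x ^ e) := by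
      intro x hx
      have hx0 : (0:ℝ) < x := lt_trans one_pos hx
      simp only [hG]
      rw [← ENNReal.ofReal_mul hc2pos.le]
      congr 1
      rw [Real.div_rpow hx0.le hk.le]
      have hke : k ^ e ≠ 0 := ne_of_gt (Real.rpow_pos_of_pos hk e)
      have hkα : k*(1-α) ≠ 0 := by positivity
      rw [hc2]
      field_simp
    rw [setLIntegral_congr_fun measurableSet_Ioi heq,
      lintegral_const_mul' _ _ ENNReal.ofReal_ne_top]
    exact ENNReal.mul_lt_top ENNReal.ofReal_lt_top hg_int
  calc ∫⁻ x in f '' Ioo (0:ℝ) d, G x ≤ ∫⁻ x in Ioc b 1 ∪ Ioi 1, G x := lintegral_mono_set himg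
    _ ≤ (∫⁻ x in Ioc b 1, G x) + ∫⁻ x in Ioi 1, G x := lintegral_union_le _ _ _
    _ < ⊤ := ENNReal.add_lt_top.mpr ⟨part1, part2⟩
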